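/- The unit ball of the hexagonal norm D is the convex hull of the six points (1,0), (1/2, √3/2), (−1/2, √3/2), (−1,0), (−1/2, −√3/2), (1/2, −√3/2), i.e., a regular hexagon. -/
import Mathlib


noncomputable def D (p : ℝ × ℝ) : ℝ :=
  max (|p.1| + |p.2| / Real.sqrt 3) (2 * |p.2| / Real.sqrt 3)

namespace HexAux

noncomputable def s : ℝ := Real.sqrt 3

lemma s_pos : (0:ℝ) < s := Real.sqrt_pos.mpr (by norm_num)

lemma s_sq : s * s = 3 := Real.mul_self_sqrt (by norm_num)

def hexS : Set (ℝ × ℝ) :=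
  {((1 : ℝ), (0 : ℝ)), (1/2, Real.sqrt 3 / 2), (-(1/2), Real.sqrt 3 / 2),
    (-1, 0), (-(1/2), -(Real.sqrt 3 / 2)), (1/2, -(Real.sqrt 3 / 2))}

lemma div_le_one_iff' (x y : ℝ) : x + y / s ≤ 1 ↔ x * s + y ≤ s := by
  rw [show x + y / s = (x * s + y) / s by
    rw [add_div, mul_div_cancel_right₀ _ s_pos.ne'], div_le_one s_pos]

lemma div2_le_one_iff (y : ℝ) : 2 * y / s ≤ 1 ↔ 2 * y ≤ s := by
  rw [div_le_one s_pos]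

lemma convex_ball : Convex ℝ {p : ℝ × ℝ | D p ≤ 1} := by
  intro p hp q hq a b ha hb hab
  simp only [Set.mem_setOf_eq, D, max_le_iff] at hp hq ⊢
  obtain ⟨hp1, hp2⟩ := hp
  obtain ⟨hq1, hq2⟩ := hq
  rw [show Real.sqrt 3 = s from rfl] at hp1 hp2 hq1 hq2 ⊢
  rw [div_le_one_iff'] at hp1 hq1
  rw [div2_le_one_iff] at hp2 hq2
  rw [div_le_one_iff', div2_le_one_iff]
  have hfst : (a • p + b • q).1 = a * p.1 + b * q.1 := rfl
  have hsnd : (a • p + b • q).2 = a * p.2 + b * q.2 := rfl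
  rw [hfst, hsnd]
  have habs1 : |a * p.1 + b * q.1| ≤ a * |p.1| + b * |q.1| := by
    calc |a * p.1 + b * q.1| ≤ |a * p.1| + |b * q.1| := abs_add_le _ _
    _ = a * |p.1| + b * |q.1| := by rw [abs_mul, abs_mul, abs_of_nonneg ha, abs_of_nonneg hb]
  have habs2 : |a * p.2 + b * q.2| ≤ a * |p.2| + b * |q.2| := by
    calc |a * p.2 + b * q.2| ≤ |a * p.2| + |b * q.2| := abs_add_le _ _
    _ = a * |p.2| + b * |q.2| := by rw [abs_mul, abs_mul, abs_of_nonneg ha, abs_of_nonneg hb]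
  constructor
  · have h1 : a * (|p.1| * s + |p.2|) ≤ a * s := mul_le_mul_of_nonneg_left hp1 ha
    have h2 : b * (|q.1| * s + |q.2|) ≤ b * s := mul_le_mul_of_nonneg_left hq1 hb
    have h3 : |a * p.1 + b * q.1| * s ≤ (a * |p.1| + b * |q.1|) * s :=
      mul_le_mul_of_nonneg_right habs1 s_pos.le
    nlinarith [s_pos]
  · have h1 : a * (2 * |p.2|) ≤ a * s := mul_le_mul_of_nonneg_left hp2 ha
    have h2 : b * (2 * |q.2|) ≤ b * s := mul_le_mul_of_nonneg_left hq2 hb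
    nlinarith [s_pos]

lemma mem4 {t : Set (ℝ × ℝ)} (ht : Convex ℝ t) {v0 v1 v2 v3 : ℝ × ℝ}
    (h0 : v0 ∈ t) (h1 : v1 ∈ t) (h2 : v2 ∈ t) (h3 : v3 ∈ t)
    {a b c d : ℝ} (ha : 0 ≤ a) (hb : 0 ≤ b) (hc : 0 ≤ c) (hd : 0 ≤ d)
    (hsum : a + b + c + d = 1) :
    a • v0 + b • v1 + c • v2 + d • v3 ∈ t := by
  have := ht.sum_mem (t := (Finset.univ : Finset (Fin 4)))
    (w := ![a, b, c, d]) (z := ![v0, v1, v2, v3])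
    (by intro i _; fin_cases i <;> simp [ha, hb, hc, hd])
    (by simp [Fin.sum_univ_four, hsum])
    (by intro i _; fin_cases i <;> simpa)
  simpa [Fin.sum_univ_four] using this

lemma symm_x : ∀ p ∈ convexHull ℝ hexS, ((-p.1, p.2) : ℝ × ℝ) ∈ convexHull ℝ hexS := by
  have hT : Convex ℝ {p : ℝ × ℝ | ((-p.1, p.2) : ℝ × ℝ) ∈ convexHull ℝ hexS} := by
    intro p hp q hq a b ha hb hab
    have h := (convex_convexHull ℝ hexS) hp hq ha hb hab
    simp only [Set.mem_setOf_eq] at h ⊢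
    have : ((-(a • p + b • q).1, (a • p + b • q).2) : ℝ × ℝ)
        = a • ((-p.1, p.2) : ℝ × ℝ) + b • ((-q.1, q.2) : ℝ × ℝ) := by
      simp [Prod.ext_iff, Prod.smul_mk, smul_eq_mul]; ring
    rw [this]; exact h
  have hsub : hexS ⊆ {p : ℝ × ℝ | ((-p.1, p.2) : ℝ × ℝ) ∈ convexHull ℝ hexS} := by
    intro v hv
    apply subset_convexHull ℝ hexS
    simp only [hexS, Set.mem_insert_iff, Set.mem_singleton_iff] at hv ⊢
    rcases hv with h|h|h|h|h|h <;> subst h <;> norm_num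
  intro p hp
  exact convexHull_min hsub hT hp

lemma symm_y : ∀ p ∈ convexHull ℝ hexS, ((p.1, -p.2) : ℝ × ℝ) ∈ convexHull ℝ hexS := by
  have hT : Convex ℝ {p : ℝ × ℝ | ((p.1, -p.2) : ℝ × ℝ) ∈ convexHull ℝ hexS} := by
    intro p hp q hq a b ha hb hab
    have h := (convex_convexHull ℝ hexS) hp hq ha hb hab
    simp only [Set.mem_setOf_eq] at h ⊢
    have : (((a • p + b • q).1, -(a • p + b • q).2) : ℝ × ℝ)
        = a • ((p.1, -p.2) : ℝ × ℝ) + b • ((q.1, -q.2) : ℝ × ℝ) := by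
      simp [Prod.ext_iff, Prod.smul_mk, smul_eq_mul]; ring
    rw [this]; exact h
  have hsub : hexS ⊆ {p : ℝ × ℝ | ((p.1, -p.2) : ℝ × ℝ) ∈ convexHull ℝ hexS} := by
    intro v hv
    apply subset_convexHull ℝ hexS
    simp only [hexS, Set.mem_insert_iff, Set.mem_singleton_iff] at hv ⊢
    rcases hv with h|h|h|h|h|h <;> subst h <;> norm_num
  intro p hp
  exact convexHull_min hsub hT hp

lemma v0_mem : ((1:ℝ), (0:ℝ)) ∈ convexHull ℝ hexS :=
  subset_convexHull ℝ hexS (by simp [hexS])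
lemma v1_mem : ((1/2 : ℝ), Real.sqrt 3 / 2) ∈ convexHull ℝ hexS :=
  subset_convexHull ℝ hexS (by simp [hexS])
lemma v2_mem : ((-(1/2) : ℝ), Real.sqrt 3 / 2) ∈ convexHull ℝ hexS :=
  subset_convexHull ℝ hexS (by simp [hexS])
lemma v3_mem : ((-1 : ℝ), (0:ℝ)) ∈ convexHull ℝ hexS :=
  subset_convexHull ℝ hexS (by simp [hexS])

lemma key (x y : ℝ) (hx : 0 ≤ x) (hy : 0 ≤ y) (h1 : x * s + y ≤ s) (h2 : 2 * y ≤ s) :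
    ((x, y) : ℝ × ℝ) ∈ convexHull ℝ hexS := by
  have hconv := convex_convexHull ℝ hexS
  have hs := s_pos
  have hss := s_sq
  rcases le_or_gt (s * y - 1) x with hcase | hcase
  · -- x ≥ s*y - 1 : use v0, v1, v3
    have ha : 0 ≤ (1 + x - s * y) / 2 := by linarith
    have hb : 0 ≤ 2 * s * y / 3 := by positivity
    have he : 0 ≤ (1 - x - s * y / 3) / 2 := by nlinarith
    have heq : ((x, y) : ℝ × ℝ) =
        ((1 + x - s * y) / 2) • ((1:ℝ), (0:ℝ)) + (2 * s * y / 3) • ((1/2 : ℝ), s / 2)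
          + (0:ℝ) • ((-(1/2) : ℝ), s / 2) + ((1 - x - s * y / 3) / 2) • ((-1 : ℝ), (0:ℝ)) := by
      simp only [Prod.smul_mk, smul_eq_mul, Prod.mk_add_mk, Prod.ext_iff]
      constructor <;> nlinarith
    rw [heq]
    exact mem4 hconv v0_mem v1_mem v2_mem v3_mem ha hb le_rfl he (by ring)
  · -- x < s*y - 1 : use v1, v2, v3
    have hb : 0 ≤ x + 1 - s * y / 3 := by nlinarith
    have hc : 0 ≤ s * y - x - 1 := by linarith
    have he : 0 ≤ 1 - 2 * s * y / 3 := by nlinarith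
    have heq : ((x, y) : ℝ × ℝ) =
        (0:ℝ) • ((1:ℝ), (0:ℝ)) + (x + 1 - s * y / 3) • ((1/2 : ℝ), s / 2)
          + (s * y - x - 1) • ((-(1/2) : ℝ), s / 2)
          + (1 - 2 * s * y / 3) • ((-1 : ℝ), (0:ℝ)) := by
      simp only [Prod.smul_mk, smul_eq_mul, Prod.mk_add_mk, Prod.ext_iff]
      constructor <;> nlinarith
    rw [heq]
    exact mem4 hconv v0_mem v1_mem v2_mem v3_mem le_rfl hb hc he (by ring)

end HexAux

theorem unit_ball_is_regular_hexagon :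
    {p : ℝ × ℝ | D p ≤ 1} =
      convexHull ℝ
        ({((1 : ℝ), (0 : ℝ)), (1/2, Real.sqrt 3 / 2), (-(1/2), Real.sqrt 3 / 2),
          (-1, 0), (-(1/2), -(Real.sqrt 3 / 2)), (1/2, -(Real.sqrt 3 / 2))} :
          Set (ℝ × ℝ)) := by
  open HexAux in
  show {p : ℝ × ℝ | D p ≤ 1} = convexHull ℝ HexAux.hexS
  have hs := HexAux.s_pos
  have hss := HexAux.s_sq
  apply Set.eq_of_subset_of_subset
  · rintro ⟨x, y⟩ hp
    simp only [Set.mem_setOf_eq, D, max_le_iff] at hp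
    obtain ⟨h1, h2⟩ := hp
    rw [show Real.sqrt 3 = HexAux.s from rfl] at h1 h2
    rw [HexAux.div_le_one_iff'] at h1
    rw [HexAux.div2_le_one_iff] at h2
    have hkey : ((|x|, |y|) : ℝ × ℝ) ∈ convexHull ℝ HexAux.hexS :=
      HexAux.key _ _ (abs_nonneg x) (abs_nonneg y) h1 h2
    have hx2 : ((x, |y|) : ℝ × ℝ) ∈ convexHull ℝ HexAux.hexS := by
      rcases abs_cases x with ⟨h, _⟩ | ⟨h, _⟩
      · rwa [h] at hkey
      · have := HexAux.symm_x _ hkey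
        simp only at this
        rwa [h, neg_neg] at this
    rcases abs_cases y with ⟨h, _⟩ | ⟨h, _⟩
    · rwa [h] at hx2
    · have := HexAux.symm_y _ hx2
      simp only at this
      rwa [h, neg_neg] at this
  · apply convexHull_min _ HexAux.convex_ball
    intro v hv
    simp only [HexAux.hexS, Set.mem_insert_iff, Set.mem_singleton_iff] at hv
    have habs : |HexAux.s / 2| = HexAux.s / 2 := abs_of_nonneg (by positivity)
    rcases hv with h|h|h|h|h|h <;> subst h
    all_goals
      simp only [Set.mem_setOf_eq, D, max_le_iff,
        show Real.sqrt 3 = HexAux.s from rfl, abs_neg, habs]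
      norm_num [HexAux.div_le_one_iff', HexAux.div2_le_one_iff]
    all_goals constructor <;> nlinarith [hs, hss, abs_of_nonneg (show (0:ℝ) ≤ 1/2 by norm_num)]
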